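/- The maps σ̄_-(z), σ_-(z): B → B[z^{-1}] defined by σ̄_-(z)h_n = h_n − h_{n−1}z^{−1} and σ_-(z)h_n = Σ_{0≤j≤n} h_{n−j}z^{−j} and extended via Schur determinants (σ_-(z)Δ_λ(H) := Δ_λ(σ_-(z)H)) are ring homomorphisms. -/

import Mathlib

noncomputable section

/-- `B = ℤ[e₁, e₂, …]`, with `e_{n+1} := X n`. -/
abbrev B : Type := MvPolynomial ℕ ℤ

/-- `e_j` for `j ≥ 1`. -/
def e (j : ℕ) : B := MvPolynomial.X (j - 1)

/-- The complete homogeneous symmetric functions `h_n`, defined by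
`H(z)E(z) = 1` where `E(z) = 1 + ∑_{j≥1} (−1)^j e_j z^j`, i.e.
`h_n = ∑_{j=1}^n (−1)^{j+1} e_j h_{n−j}`, `h_0 = 1`. -/
def h : ℕ → B
  | 0 => 1
  | n + 1 => ∑ j ∈ Finset.range (n + 1), (-1 : B) ^ j * e (j + 1) * h (n - j)
  decreasing_by exact Nat.lt_succ_of_le (Nat.sub_le n j)

/-- `h` extended to `ℤ` by `h_k = 0` for `k < 0`. -/
def hz (k : ℤ) : B := if 0 ≤ k then h k.toNat else 0

/-- The Schur polynomial `Δ_λ(H) = det(h_{λⱼ−j+i})_{1≤i,j≤r}` (0-indexed). -/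
def SchurD (r : ℕ) (lam : Fin r → ℕ) : B :=
  Matrix.det (Matrix.of fun i j : Fin r =>
    hz (((lam j : ℕ) : ℤ) - ((j : ℕ) : ℤ) + ((i : ℕ) : ℤ)))

lemma hz_natCast (m : ℕ) : hz (m : ℤ) = h m := by simp [hz]
lemma hz_neg {k : ℤ} (hk : k < 0) : hz k = 0 := by simp [hz, not_le.mpr hk]
lemma hz_nonneg {k : ℤ} (hk : 0 ≤ k) : hz k = h k.toNat := if_pos hk

open Finset in
lemma measure_lt {r : ℕ} {lam : Fin r → ℕ} (hlam : Antitone lam)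
    (σ : Equiv.Perm (Fin r)) (hσ : σ ≠ 1)
    (hpos : ∀ i, (0:ℤ) ≤ (lam i : ℤ) - (i : ℕ) + ((σ i : ℕ) : ℤ)) :
    ∑ i, (r+1)^(lam i) < ∑ i, (r+1)^(((lam i : ℤ) - (i : ℕ) + ((σ i : ℕ) : ℤ)).toNat) := by
  have hex : ∃ i, σ i ≠ i := by
    by_contra hc
    push_neg at hc
    exact hσ (Equiv.ext hc)
  set F : Finset (Fin r) := univ.filter (fun i => σ i ≠ i) with hF
  have hFne : F.Nonempty := by
    obtain ⟨i, hi⟩ := hex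
    exact ⟨i, by simp [hF, hi]⟩
  set k : Fin r := F.min' hFne with hk
  have hkmem : σ k ≠ k := by
    have := F.min'_mem hFne
    simp [hF] at this
    exact this
  have hmin : ∀ i, σ i ≠ i → k ≤ i := fun i hi => F.min'_le i (by simp [hF, hi])
  have hfix : ∀ i, i < k → σ i = i := by
    intro i hi
    by_contra hc
    exact absurd (hmin i hc) (not_le.mpr hi)
  have hklt : k < σ k := by
    rcases lt_or_gt_of_ne hkmem with hlt | hgt
    · have : σ (σ k) = σ k := hfix _ hlt
      exact absurd (σ.injective this) hkmem
    · exact hgt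
  -- key value bound at k
  have hνk : lam k + 1 ≤ ((lam k : ℤ) - (k : ℕ) + ((σ k : ℕ) : ℤ)).toNat := by
    have h1 : ((lam k + 1 : ℕ) : ℤ) ≤ (lam k : ℤ) - (k : ℕ) + ((σ k : ℕ) : ℤ) := by
      have : ((k : ℕ) : ℤ) + 1 ≤ ((σ k : ℕ) : ℤ) := by exact_mod_cast hklt
      push_cast
      omega
    exact (Int.le_toNat (hpos k)).mpr h1
  -- split sums
  rw [← Finset.sum_filter_add_sum_filter_not univ (fun i => i < k) (fun i => (r+1)^(lam i)),
      ← Finset.sum_filter_add_sum_filter_not univ (fun i => i < k)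
        (fun i => (r+1)^(((lam i : ℤ) - (i : ℕ) + ((σ i : ℕ) : ℤ)).toNat))]
  have heqA : ∑ i ∈ univ.filter (fun i => i < k), (r+1)^(lam i)
      = ∑ i ∈ univ.filter (fun i => i < k),
        (r+1)^(((lam i : ℤ) - (i : ℕ) + ((σ i : ℕ) : ℤ)).toNat) := by
    refine Finset.sum_congr rfl ?_
    intro i hi
    simp only [mem_filter] at hi
    rw [hfix i hi.2]
    congr 1
    omega
  rw [heqA]
  refine Nat.add_lt_add_left ?_ _
  -- LHS on complement ≤ r * (r+1)^(lam k) < (r+1)^(lam k + 1) ≤ single RHS term ≤ RHS sum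
  have hL : ∑ i ∈ univ.filter (fun i => ¬ i < k), (r+1)^(lam i)
      ≤ (univ.filter (fun i => ¬ i < k)).card * (r+1)^(lam k) := by
    rw [← smul_eq_mul]
    refine Finset.sum_le_card_nsmul _ _ _ ?_
    intro i hi
    simp only [mem_filter, not_lt] at hi
    exact Nat.pow_le_pow_right (Nat.succ_pos r) (hlam hi.2)
  have hcard : (univ.filter (fun i => ¬ i < k)).card ≤ r := by
    calc (univ.filter (fun i => ¬ i < k)).card ≤ (univ : Finset (Fin r)).card :=
      Finset.card_filter_le _ _
    _ = r := by simp
  have hR : (r+1)^(lam k + 1)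
      ≤ ∑ i ∈ univ.filter (fun i => ¬ i < k),
        (r+1)^(((lam i : ℤ) - (i : ℕ) + ((σ i : ℕ) : ℤ)).toNat) := by
    calc (r+1)^(lam k + 1)
        ≤ (r+1)^(((lam k : ℤ) - (k : ℕ) + ((σ k : ℕ) : ℤ)).toNat) :=
          Nat.pow_le_pow_right (Nat.succ_pos r) hνk
      _ ≤ _ := Finset.single_le_sum
            (f := fun i => (r+1)^(((lam i : ℤ) - (i : ℕ) + ((σ i : ℕ) : ℤ)).toNat))
            (fun i _ => Nat.zero_le _)
            (Finset.mem_filter.mpr ⟨Finset.mem_univ k, lt_irrefl k⟩)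
  calc ∑ i ∈ univ.filter (fun i => ¬ i < k), (r+1)^(lam i)
      ≤ (univ.filter (fun i => ¬ i < k)).card * (r+1)^(lam k) := hL
    _ ≤ r * (r+1)^(lam k) := Nat.mul_le_mul_right _ hcard
    _ < (r+1) * (r+1)^(lam k) := by
        have hp : 0 < (r+1)^(lam k) := Nat.pow_pos (Nat.succ_pos r)
        calc r * (r+1)^(lam k) < r * (r+1)^(lam k) + (r+1)^(lam k) := Nat.lt_add_of_pos_right hp
        _ = (r+1) * (r+1)^(lam k) := by ring
    _ = (r+1)^(lam k + 1) := by ring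
    _ ≤ _ := hR

open Finset in
lemma key (φ : B →ₗ[ℤ] Polynomial B)
    (hφΔ : ∀ (r : ℕ) (lam : Fin r → ℕ), Antitone lam →
      φ (SchurD r lam) =
        Matrix.det (Matrix.of fun i j : Fin r =>
          φ (hz (((lam j : ℕ) : ℤ) - ((j : ℕ) : ℤ) + ((i : ℕ) : ℤ))))) :
    ∀ (t r : ℕ) (μ : Fin r → ℕ),
      (r+1)^(∑ i, μ i + 1) - ∑ i, (r+1)^(μ i) ≤ t →
      φ (∏ i, h (μ i)) = ∏ i, φ (h (μ i)) := by
  intro t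
  induction t using Nat.strong_induction_on with
  | _ t IH =>
  intro r μ hμt
  -- sort μ into an antitone tuple lam
  set τ : Equiv.Perm (Fin r) := Fin.revPerm.trans (Tuple.sort μ) with hτ
  set lam : Fin r → ℕ := fun i => μ (τ i) with hlamdef
  have hA : Antitone lam := by
    have hmono : Monotone (μ ∘ Tuple.sort μ) := Tuple.monotone_sort μ
    intro i j hij
    exact hmono (Fin.rev_le_rev.mpr hij)
  have hprod : ∏ i, h (lam i) = ∏ i, h (μ i) := Equiv.prod_comp τ (fun i => h (μ i))
  have hprodφ : ∏ i, φ (h (lam i)) = ∏ i, φ (h (μ i)) :=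
    Equiv.prod_comp τ (fun i => φ (h (μ i)))
  have hsum : ∑ i, lam i = ∑ i, μ i := Equiv.sum_comp τ μ
  have hmes : ∑ i, (r+1)^(lam i) = ∑ i, (r+1)^(μ i) :=
    Equiv.sum_comp τ (fun i => (r+1)^(μ i))
  rw [← hprod, ← hprodφ]
  rw [← hsum, ← hmes] at hμt
  clear hprod hprodφ hsum hmes hτ hlamdef
  -- bound lemma for any tuple
  have hbound : ∀ ν : Fin r → ℕ, ∑ i, (r+1)^(ν i) < (r+1)^(∑ i, ν i + 1) := by
    intro ν
    calc ∑ i, (r+1)^(ν i) ≤ (univ : Finset (Fin r)).card * (r+1)^(∑ i, ν i) := by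
          rw [← smul_eq_mul]
          refine Finset.sum_le_card_nsmul _ _ _ ?_
          intro i _
          exact Nat.pow_le_pow_right (Nat.succ_pos r)
            (Finset.single_le_sum (fun j _ => Nat.zero_le _) (mem_univ i))
      _ = r * (r+1)^(∑ i, ν i) := by simp
      _ < (r+1) * (r+1)^(∑ i, ν i) := by
          have hp : 0 < (r+1)^(∑ i, ν i) := Nat.pow_pos (Nat.succ_pos r)
          calc r * (r+1)^(∑ i, ν i) < r * (r+1)^(∑ i, ν i) + (r+1)^(∑ i, ν i) :=
              Nat.lt_add_of_pos_right hp
            _ = (r+1) * (r+1)^(∑ i, ν i) := by ring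
      _ = (r+1)^(∑ i, ν i + 1) := by ring
  -- the per-permutation claim
  have hterm : ∀ σ : Equiv.Perm (Fin r), σ ≠ 1 →
      φ (∏ i, hz ((lam i : ℤ) - (i : ℕ) + ((σ i : ℕ) : ℤ)))
        = ∏ i, φ (hz ((lam i : ℤ) - (i : ℕ) + ((σ i : ℕ) : ℤ))) := by
    intro σ hσ
    by_cases hpos : ∀ i, (0:ℤ) ≤ (lam i : ℤ) - (i : ℕ) + ((σ i : ℕ) : ℤ)
    · set ν : Fin r → ℕ := fun i => ((lam i : ℤ) - (i : ℕ) + ((σ i : ℕ) : ℤ)).toNat with hν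
      have hentry : ∀ i, hz ((lam i : ℤ) - (i : ℕ) + ((σ i : ℕ) : ℤ)) = h (ν i) :=
        fun i => hz_nonneg (hpos i)
      have hsumν : ∑ i, ν i = ∑ i, lam i := by
        have hc : (↑(∑ i, ν i) : ℤ) = (↑(∑ i, lam i) : ℤ) := by
          push_cast
          rw [Finset.sum_congr rfl (fun i (_ : i ∈ univ) => Int.toNat_of_nonneg (hpos i))]
          rw [Finset.sum_add_distrib, Finset.sum_sub_distrib]
          rw [Equiv.sum_comp σ (fun i : Fin r => ((i : ℕ) : ℤ))]
          ring
        exact_mod_cast hc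
      have hmlt : ∑ i, (r+1)^(lam i) < ∑ i, (r+1)^(ν i) := measure_lt hA σ hσ hpos
      have hIH : φ (∏ i, h (ν i)) = ∏ i, φ (h (ν i)) := by
        refine IH ((r+1)^(∑ i, ν i + 1) - ∑ i, (r+1)^(ν i)) ?_ r ν le_rfl
        calc (r+1)^(∑ i, ν i + 1) - ∑ i, (r+1)^(ν i)
            < (r+1)^(∑ i, lam i + 1) - ∑ i, (r+1)^(lam i) := by
              rw [hsumν]
              exact Nat.sub_lt_sub_left (hbound lam) hmlt
          _ ≤ t := hμt
      calc φ (∏ i, hz ((lam i : ℤ) - (i : ℕ) + ((σ i : ℕ) : ℤ)))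
          = φ (∏ i, h (ν i)) := by rw [Finset.prod_congr rfl (fun i _ => hentry i)]
        _ = ∏ i, φ (h (ν i)) := hIH
        _ = ∏ i, φ (hz ((lam i : ℤ) - (i : ℕ) + ((σ i : ℕ) : ℤ))) := by
            exact (Finset.prod_congr rfl (fun i _ => by rw [hentry i])).symm
    · push_neg at hpos
      obtain ⟨i, hi⟩ := hpos
      have h0 : hz ((lam i : ℤ) - (i : ℕ) + ((σ i : ℕ) : ℤ)) = 0 := hz_neg hi
      rw [Finset.prod_eq_zero (mem_univ i) h0, map_zero,
        Finset.prod_eq_zero (mem_univ i) (by rw [h0, map_zero])]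
  -- compute φ (SchurD) two ways
  have hdet1 : φ (SchurD r lam) = ∑ σ : Equiv.Perm (Fin r),
      Equiv.Perm.sign σ • φ (∏ i, hz ((lam i : ℤ) - (i : ℕ) + ((σ i : ℕ) : ℤ))) := by
    rw [SchurD, Matrix.det_apply, map_sum]
    refine Finset.sum_congr rfl fun σ _ => ?_
    rw [Units.smul_def, map_zsmul, ← Units.smul_def]
    simp only [Matrix.of_apply]
  have hdet2 : φ (SchurD r lam) = ∑ σ : Equiv.Perm (Fin r),
      Equiv.Perm.sign σ • ∏ i, φ (hz ((lam i : ℤ) - (i : ℕ) + ((σ i : ℕ) : ℤ))) := by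
    rw [hφΔ r lam hA, Matrix.det_apply]
    simp only [Matrix.of_apply]
  have hcomb := hdet1.symm.trans hdet2
  rw [← Finset.sum_erase_add _ _ (Finset.mem_univ (1 : Equiv.Perm (Fin r))),
    ← Finset.sum_erase_add _ _ (Finset.mem_univ (1 : Equiv.Perm (Fin r)))] at hcomb
  have herase : ∑ σ ∈ univ.erase (1 : Equiv.Perm (Fin r)),
      Equiv.Perm.sign σ • φ (∏ i, hz ((lam i : ℤ) - (i : ℕ) + ((σ i : ℕ) : ℤ)))
      = ∑ σ ∈ univ.erase (1 : Equiv.Perm (Fin r)),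
      Equiv.Perm.sign σ • ∏ i, φ (hz ((lam i : ℤ) - (i : ℕ) + ((σ i : ℕ) : ℤ))) := by
    refine Finset.sum_congr rfl fun σ hσ => ?_
    rw [hterm σ (Finset.ne_of_mem_erase hσ)]
  rw [herase] at hcomb
  have hid := add_left_cancel hcomb
  simp only [Equiv.Perm.one_apply, map_one, one_smul] at hid
  have hentry1 : ∀ i : Fin r, hz ((lam i : ℤ) - (i : ℕ) + ((i : ℕ) : ℤ)) = h (lam i) := by
    intro i
    rw [sub_add_cancel, hz_natCast]
  calc φ (∏ i, h (lam i))
      = φ (∏ i, hz ((lam i : ℤ) - (i : ℕ) + ((i : ℕ) : ℤ))) := by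
        rw [Finset.prod_congr rfl (fun i _ => hentry1 i)]
    _ = ∏ i, φ (hz ((lam i : ℤ) - (i : ℕ) + ((i : ℕ) : ℤ))) := hid
    _ = ∏ i, φ (h (lam i)) := Finset.prod_congr rfl (fun i _ => by rw [hentry1 i])

open Finset in
lemma e_mem (n : ℕ) : e (n+1) ∈ Algebra.adjoin ℤ (Set.range h) := by
  induction n using Nat.strong_induction_on with
  | _ n IH =>
  have hh : ∀ m, h m ∈ Algebra.adjoin ℤ (Set.range h) :=
    fun m => Algebra.subset_adjoin ⟨m, rfl⟩
  have hrec : h (n+1)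
      = (∑ j ∈ Finset.range n, (-1:B)^j * e (j+1) * h (n-j)) + (-1:B)^n * e (n+1) := by
    rw [h, Finset.sum_range_succ, Nat.sub_self]
    have h0 : h 0 = 1 := by rw [h]
    rw [h0, mul_one]
  have hs : ∑ j ∈ Finset.range n, (-1:B)^j * e (j+1) * h (n-j)
      ∈ Algebra.adjoin ℤ (Set.range h) := by
    refine Subalgebra.sum_mem _ fun j hj => ?_
    exact mul_mem (mul_mem (pow_mem (neg_mem (one_mem _)) j)
      (IH j (Finset.mem_range.mp hj))) (hh _)
  have hmem : (-1:B)^n * e (n+1) ∈ Algebra.adjoin ℤ (Set.range h) := by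
    have heq : (-1:B)^n * e (n+1)
        = h (n+1) - ∑ j ∈ Finset.range n, (-1:B)^j * e (j+1) * h (n-j) := by
      rw [hrec]; ring
    rw [heq]
    exact sub_mem (hh _) hs
  have hsq : (-1:B)^n * ((-1:B)^n * e (n+1)) = e (n+1) := by
    rw [← mul_assoc, ← pow_add, Even.neg_one_pow ⟨n, rfl⟩, one_mul]
  rw [← hsq]
  exact mul_mem (pow_mem (neg_mem (one_mem _)) n) hmem

lemma adjoin_h_top : Algebra.adjoin ℤ (Set.range h) = ⊤ := by
  rw [eq_top_iff, ← MvPolynomial.adjoin_range_X (R := ℤ) (σ := ℕ)]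
  refine Algebra.adjoin_le ?_
  rintro _ ⟨n, rfl⟩
  exact e_mem n

lemma mem_span_closure (a : B) :
    a ∈ Submodule.span ℤ ((Submonoid.closure (Set.range h) : Submonoid B) : Set B) := by
  have h1 := Algebra.adjoin_eq_span ℤ (Set.range h)
  rw [← h1, adjoin_h_top]
  simp

lemma closure_repr : ∀ x ∈ Submonoid.closure (Set.range h),
    ∃ (r : ℕ) (μ : Fin r → ℕ), x = ∏ i, h (μ i) := by
  intro x hx
  induction hx using Submonoid.closure_induction with
  | mem y hy =>
    obtain ⟨m, rfl⟩ := hy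
    exact ⟨1, fun _ => m, by simp⟩
  | one => exact ⟨0, fun _ => 0, by simp⟩
  | mul y z hy hz ihy ihz =>
    obtain ⟨r, μ, rfl⟩ := ihy
    obtain ⟨s, ν, rfl⟩ := ihz
    refine ⟨r + s, Fin.append μ ν, ?_⟩
    rw [Fin.prod_univ_add]
    congr 1
    · exact Finset.prod_congr rfl fun i _ => by rw [Fin.append_left]
    · exact Finset.prod_congr rfl fun i _ => by rw [Fin.append_right]

lemma main_mul (φ : B →ₗ[ℤ] Polynomial B)
    (K : ∀ (r : ℕ) (μ : Fin r → ℕ), φ (∏ i, h (μ i)) = ∏ i, φ (h (μ i))) :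
    ∀ a b : B, φ (a * b) = φ a * φ b := by
  have hgen : ∀ x ∈ Submonoid.closure (Set.range h), ∀ y ∈ Submonoid.closure (Set.range h),
      φ (x * y) = φ x * φ y := by
    intro x hx y hy
    obtain ⟨r, μ, rfl⟩ := closure_repr x hx
    obtain ⟨s, ν, rfl⟩ := closure_repr y hy
    have hxy : (∏ i, h (μ i)) * ∏ i, h (ν i) = ∏ i : Fin (r+s), h (Fin.append μ ν i) := by
      rw [Fin.prod_univ_add]
      congr 1
      · exact (Finset.prod_congr rfl fun i _ => by rw [Fin.append_left]).symm
      · exact (Finset.prod_congr rfl fun i _ => by rw [Fin.append_right]).symm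
    have hxyφ : (∏ i, φ (h (μ i))) * ∏ i, φ (h (ν i))
        = ∏ i : Fin (r+s), φ (h (Fin.append μ ν i)) := by
      rw [Fin.prod_univ_add]
      congr 1
      · exact (Finset.prod_congr rfl fun i _ => by rw [Fin.append_left]).symm
      · exact (Finset.prod_congr rfl fun i _ => by rw [Fin.append_right]).symm
    rw [hxy, K, K, K, hxyφ]
  intro a b
  have ha := mem_span_closure a
  have hb := mem_span_closure b
  induction ha using Submodule.span_induction with
  | mem x hx =>
    induction hb using Submodule.span_induction with
    | mem y hy => exact hgen x hx y hy
    | zero => rw [mul_zero, map_zero, mul_zero]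
    | add y z hy hz ihy ihz => rw [mul_add, map_add, map_add, mul_add, ihy, ihz]
    | smul c y hy ihy => rw [mul_smul_comm, map_smul, map_smul, ihy, mul_smul_comm]
  | zero => rw [zero_mul, map_zero, zero_mul]

  | add x y hx hy ihx ihy => rw [add_mul, map_add, map_add, add_mul, ihx, ihy]
  | smul c x hx ihx => rw [smul_mul_assoc, map_smul, map_smul, ihx, smul_mul_assoc]

lemma main_all (φ : B →ₗ[ℤ] Polynomial B)
    (hφΔ : ∀ (r : ℕ) (lam : Fin r → ℕ), Antitone lam →
      φ (SchurD r lam) =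
        Matrix.det (Matrix.of fun i j : Fin r =>
          φ (hz (((lam j : ℕ) : ℤ) - ((j : ℕ) : ℤ) + ((i : ℕ) : ℤ))))) :
    (∀ a b : B, φ (a * b) = φ a * φ b) ∧ φ 1 = 1 := by
  have K : ∀ (r : ℕ) (μ : Fin r → ℕ), φ (∏ i, h (μ i)) = ∏ i, φ (h (μ i)) :=
    fun r μ => key φ hφΔ ((r+1)^(∑ i, μ i + 1) - ∑ i, (r+1)^(μ i)) r μ le_rfl
  refine ⟨main_mul φ K, ?_⟩
  simpa using K 0 (fun _ => 0)


/-- The maps `σ̄₋(z), σ₋(z) : B → B[z⁻¹]` defined on the `h_n` by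
`σ̄₋(z)h_n = h_n − h_{n−1}z⁻¹`, `σ₋(z)h_n = ∑_{0≤j≤n} h_{n−j}z^{−j}` and extended
ℤ-linearly via Schur determinants (`σ₋(z)Δ_λ(H) := Δ_λ(σ₋(z)H)`) are ring
homomorphisms. -/
theorem stmt17 (φ ψ : B →ₗ[ℤ] Polynomial B)
    (hφh : ∀ n : ℕ, φ (h n) =
      Polynomial.C (h n) - Polynomial.C (hz ((n : ℤ) - 1)) * Polynomial.X)
    (hψh : ∀ n : ℕ, ψ (h n) =
      ∑ j ∈ Finset.range (n + 1), Polynomial.C (h (n - j)) * Polynomial.X ^ j)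
    (hφΔ : ∀ (r : ℕ) (lam : Fin r → ℕ), Antitone lam →
      φ (SchurD r lam) =
        Matrix.det (Matrix.of fun i j : Fin r =>
          φ (hz (((lam j : ℕ) : ℤ) - ((j : ℕ) : ℤ) + ((i : ℕ) : ℤ)))))
    (hψΔ : ∀ (r : ℕ) (lam : Fin r → ℕ), Antitone lam →
      ψ (SchurD r lam) =
        Matrix.det (Matrix.of fun i j : Fin r =>
          ψ (hz (((lam j : ℕ) : ℤ) - ((j : ℕ) : ℤ) + ((i : ℕ) : ℤ))))) :
    (∀ a b : B, φ (a * b) = φ a * φ b) ∧ φ 1 = 1 ∧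
    (∀ a b : B, ψ (a * b) = ψ a * ψ b) ∧ ψ 1 = 1 := by
  obtain ⟨h1, h2⟩ := main_all φ hφΔ
  obtain ⟨h3, h4⟩ := main_all ψ hψΔ
  exact ⟨h1, h2, h3, h4⟩
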